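/- For every integer n ≥ 1 the central binomial coefficient satisfies C(2n, n) < 4^n / √(π·n). -/

import Mathlib

open Real Stirling Nat Filter

lemma step_strict (m : ℕ) : stirlingSeq (m + 2) < stirlingSeq (m + 1) := by
  have hs := Stirling.log_stirlingSeq_diff_hasSum m
  have hpos : (0:ℝ) < (1 : ℝ) / (2 * ((0:ℕ) + 1 : ℕ) + 1) *
      ((1 / (2 * ((m + 1 : ℕ)) + 1)) ^ 2) ^ ((0:ℕ)+1 : ℕ) := by positivity
  have hsum : (0:ℝ) < log (stirlingSeq (m + 1)) - log (stirlingSeq (m + 2)) :=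
    lt_of_lt_of_le hpos (le_hasSum hs 0 fun i _ => by positivity)
  have h1 := Stirling.stirlingSeq'_pos m
  have h2 := Stirling.stirlingSeq'_pos (m+1)
  have := sub_pos.mp hsum
  exact (Real.log_lt_log_iff h2 h1).mp this

lemma sqrt_pi_le (n : ℕ) : √π ≤ stirlingSeq (n + 1) := by
  refine le_of_tendsto Stirling.tendsto_stirlingSeq_sqrt_pi ?_
  filter_upwards [eventually_ge_atTop (n+1)] with m hm
  obtain ⟨k, rfl⟩ := Nat.exists_eq_add_of_le hm
  have h := Stirling.stirlingSeq'_antitone (Nat.le_add_right n k)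
  simp only [Function.comp] at h
  have e : n + 1 + k = n + k + 1 := by omega
  rw [e]; exact h

lemma sqrt_pi_lt (n : ℕ) : √π < stirlingSeq (n + 1) :=
  lt_of_le_of_lt (sqrt_pi_le (n+1)) (step_strict n)

lemma key (n : ℕ) (hn : 1 ≤ n) :
    (Nat.choose (2 * n) n : ℝ) * Real.sqrt n * stirlingSeq n ^ 2
      = stirlingSeq (2 * n) * 4 ^ n := by
  have hn0 : (0:ℝ) < n := by exact_mod_cast hn
  have hfact : ((2*n)! : ℝ) = (Nat.choose (2*n) n : ℝ) * n ! * n ! := by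
    rw [← Nat.cast_mul, ← Nat.cast_mul, ← Nat.choose_mul_factorial_mul_factorial (by omega : n ≤ 2*n)]
    norm_num [two_mul]
  have h4 : √(2 * (2 * n : ℕ) : ℝ) = 2 * √n := by
    push_cast
    rw [show (2:ℝ) * (2 * n) = 2^2 * n by ring, Real.sqrt_mul (by positivity), Real.sqrt_sq (by norm_num)]
  have h2 : √(2 * (n:ℕ) : ℝ) ≠ 0 := by positivity
  have hpow : (((2*n : ℕ):ℝ) / exp 1) ^ (2*n : ℕ) = 4 ^ n * ((((n:ℕ):ℝ)/exp 1)^n * (((n:ℕ):ℝ)/exp 1)^n) := by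
    push_cast
    rw [pow_mul]
    rw [show ((2:ℝ) * n / exp 1)^2 = 4 * ((n:ℝ)/exp 1 * ((n:ℝ)/exp 1)) by ring]
    rw [mul_pow, mul_pow]
  rw [stirlingSeq, stirlingSeq, hfact, h4, hpow]
  have hep : (0:ℝ) < ((n:ℝ)/exp 1)^n := by positivity
  have hsp : (0:ℝ) < √n := Real.sqrt_pos.mpr hn0
  field_simp
  push_cast
  simp only [Real.sq_sqrt (by positivity : (0:ℝ) ≤ (n:ℝ)), Real.sq_sqrt (by positivity : (0:ℝ) ≤ 2 * (n:ℝ))]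
  ring

/-- For every `n ≥ 1` the central binomial coefficient satisfies
`C(2n, n) < 4ⁿ / √(π n)`. -/
theorem stmt19 (n : ℕ) (hn : 1 ≤ n) :
    (Nat.choose (2 * n) n : ℝ) < 4 ^ n / Real.sqrt (Real.pi * n) := by
  obtain ⟨m, rfl⟩ : ∃ m, n = m + 1 := ⟨n - 1, by omega⟩
  set N := m + 1
  have hn0 : (0:ℝ) < N := by positivity
  have hsN : (0:ℝ) < stirlingSeq N := Stirling.stirlingSeq'_pos m
  have hs2N : (0:ℝ) < stirlingSeq (2 * N) := by
    have : 2 * N = (2*m+1) + 1 := by omega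
    rw [this]; exact Stirling.stirlingSeq'_pos _
  have hπ : (0:ℝ) < √π := Real.sqrt_pos.mpr Real.pi_pos
  have hlt : stirlingSeq (2 * N) * √π < stirlingSeq N ^ 2 := by
    have h1 : stirlingSeq (2 * N) ≤ stirlingSeq N := by
      have : 2 * N = (2*m+1) + 1 := by omega
      rw [this]
      exact Stirling.stirlingSeq'_antitone (by omega)
    have h2 : √π < stirlingSeq N := sqrt_pi_lt m
    calc stirlingSeq (2*N) * √π ≤ stirlingSeq N * √π := by
          exact mul_le_mul_of_nonneg_right h1 hπ.le
      _ < stirlingSeq N * stirlingSeq N := by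
          exact mul_lt_mul_of_pos_left h2 hsN
      _ = stirlingSeq N ^ 2 := (sq _).symm
  have hkey := key N (by omega)
  have hsqN : (0:ℝ) < Real.sqrt N := Real.sqrt_pos.mpr hn0
  have hsqpiN : Real.sqrt (π * N) = √π * Real.sqrt N := Real.sqrt_mul Real.pi_pos.le _
  rw [hsqpiN, lt_div_iff₀ (by positivity)]
  -- goal: C * (√π * √N) < 4^N
  have h4 : (0:ℝ) < (4:ℝ)^N := by positivity
  -- from hkey : C * √N = stirlingSeq (2N) * 4^N / stirlingSeq N ^ 2
  have hC : (Nat.choose (2*N) N : ℝ) * Real.sqrt N = stirlingSeq (2*N) * 4^N / stirlingSeq N ^ 2 := by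
    field_simp at hkey ⊢
    linarith [hkey]
  calc (Nat.choose (2*N) N : ℝ) * (√π * Real.sqrt N)
      = ((Nat.choose (2*N) N : ℝ) * Real.sqrt N) * √π := by ring
    _ = stirlingSeq (2*N) * 4^N / stirlingSeq N ^ 2 * √π := by rw [hC]
    _ = (stirlingSeq (2*N) * √π) * 4^N / stirlingSeq N ^ 2 := by ring
    _ < stirlingSeq N ^ 2 * 4^N / stirlingSeq N ^ 2 := by
        gcongr
    _ = 4^N := by field_simp
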